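/- Let P = {x_1,...,x_N} ⊆ [0,1)^d with nonnegative weights w_1,...,w_N. The squared weighted periodic L₂-discrepancy, equal to 1/3^d - (2/3^d)∑_n w_n + ∑_{n,m} w_n w_m ∏_j (1/3 + B_2(|x_{n,j}-x_{m,j}|)), is at least 1/3^d - 2^d N / 3^{2d}. Consequently, if this discrepancy is at most ε²/3^d with ε ∈ (0,1), then N ≥ (1-ε²)(3/2)^d. -/

import Mathlib

/-- The second Bernoulli polynomial `B₂(x) = x² - x + 1/6`. -/
noncomputable def bern2 (x : ℝ) : ℝ := x^2 - x + 1/6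

/-- For nonnegative weights, the squared weighted periodic `L₂`-discrepancy (in its
Bernoulli-polynomial form) is at least `1/3^d - 2^d N/3^{2d}`; consequently, if it is at
most `ε²/3^d` with `ε ∈ (0,1)`, then `N ≥ (1-ε²)(3/2)^d`. -/
theorem curse_weighted_nonneg (d N : ℕ) (hN : 1 ≤ N) (X : Fin N → Fin d → ℝ)
    (hX : ∀ n j, X n j ∈ Set.Ico (0:ℝ) 1) (w : Fin N → ℝ) (hw : ∀ n, 0 ≤ w n) :
    (1/3^d - (2/3^d) * ∑ n : Fin N, w n
        + ∑ n : Fin N, ∑ m : Fin N, w n * w m *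
            ∏ j : Fin d, (1/3 + bern2 |X n j - X m j|)
      ≥ 1/3^d - 2^d * N / 3^(2*d)) ∧
    (∀ ε : ℝ, ε ∈ Set.Ioo (0:ℝ) 1 →
      1/3^d - (2/3^d) * ∑ n : Fin N, w n
          + ∑ n : Fin N, ∑ m : Fin N, w n * w m *
              ∏ j : Fin d, (1/3 + bern2 |X n j - X m j|) ≤ ε^2/3^d →
        (N : ℝ) ≥ (1 - ε^2) * (3/2)^d) := by
  have hfac : ∀ n m : Fin N, ∀ j : Fin d, (0:ℝ) ≤ 1/3 + bern2 |X n j - X m j| := by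
    intro n m j
    unfold bern2
    nlinarith [sq_nonneg (|X n j - X m j| - 1/2)]
  -- diagonal term
  have hdiag : ∀ n : Fin N, w n * w n *
      ∏ j : Fin d, (1/3 + bern2 |X n j - X n j|) = w n ^ 2 * (1/2)^d := by
    intro n
    have : ∀ j : Fin d, (1/3 + bern2 |X n j - X n j|) = (1/2 : ℝ) := by
      intro j; simp [bern2]; norm_num
    rw [Finset.prod_congr rfl (fun j _ => this j)]
    simp [sq]
  have hQ : ∑ n : Fin N, ∑ m : Fin N, w n * w m *
      ∏ j : Fin d, (1/3 + bern2 |X n j - X m j|) ≥ (∑ n : Fin N, w n ^ 2) * (1/2)^d := by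
    rw [Finset.sum_mul]
    apply Finset.sum_le_sum
    intro n _
    rw [← hdiag n]
    apply Finset.single_le_sum (f := fun m => w n * w m *
      ∏ j : Fin d, (1/3 + bern2 |X n j - X m j|))
    · intro m _
      exact mul_nonneg (mul_nonneg (hw n) (hw m)) (Finset.prod_nonneg fun j _ => hfac n m j)
    · exact Finset.mem_univ n
  set S := ∑ n : Fin N, w n with hS
  set T := ∑ n : Fin N, w n ^ 2 with hT
  have hCS : S ^ 2 ≤ (N : ℝ) * T := by
    have := sq_sum_le_card_mul_sum_sq (s := (Finset.univ : Finset (Fin N))) (f := w)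
    simpa using this
  have h2 : (0:ℝ) < 2^d := by positivity
  have h3 : (0:ℝ) < 3^d := by positivity
  have hNpos : (0:ℝ) < N := by exact_mod_cast hN
  have h32 : (3:ℝ)^(2*d) = 3^d * 3^d := by rw [two_mul, pow_add]
  have hmain : 1/3^d - (2/3^d) * S + ∑ n : Fin N, ∑ m : Fin N, w n * w m *
      ∏ j : Fin d, (1/3 + bern2 |X n j - X m j|) ≥ 1/3^d - 2^d * N / 3^(2*d) := by
    have h1 : 1/3^d - (2/3^d) * S + T * (1/2)^d ≥ 1/3^d - 2^d * N / 3^(2*d) := by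
      rw [h32]
      have hT' : S^2 / (N : ℝ) ≤ T := by
        rw [div_le_iff₀ hNpos]; linarith [hCS]
      have hkey : 2/3^d * S - 2^d * N / (3^d * 3^d) ≤ S^2 / (N : ℝ) * (1/2)^d := by
        have e : S^2 / (N : ℝ) * (1/2)^d - (2/3^d * S - 2^d * N / (3^d * 3^d))
            = (S * 3^d - N * 2^d)^2 / ((N:ℝ) * 2^d * (3^d * 3^d)) := by
          field_simp
          have h12 : (1/2:ℝ)^d * 2^d = 1 := by rw [← mul_pow]; norm_num
          linear_combination (S^2 * 3^(d*2)) * h12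
        have hpos : 0 ≤ (S * 3^d - N * 2^d)^2 / ((N:ℝ) * 2^d * (3^d * 3^d)) := by positivity
        linarith [e]
      nlinarith [mul_le_mul_of_nonneg_right hT' (le_of_lt (show (0:ℝ) < (1/2:ℝ)^d by positivity))]
    nlinarith [hQ, h1]
  refine ⟨hmain, ?_⟩
  intro ε hε hle
  have h5 : 1/3^d - 2^d * N / 3^(2*d) ≤ ε^2/3^d := le_trans hmain hle
  rw [h32] at h5
  have h2' : (2:ℝ)^d ≠ 0 := ne_of_gt h2
  have h3' : (3:ℝ)^d ≠ 0 := ne_of_gt h3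
  have h5' : (3:ℝ)^d - 2^d * N ≤ ε^2 * 3^d := by
    have hd := sub_nonneg.mpr h5
    have e : ε^2/3^d - (1/3^d - 2^d * N/(3^d*3^d)) = (ε^2*3^d - (3^d - 2^d*N))/(3^d*3^d) := by
      field_simp
    rw [e, le_div_iff₀ (mul_pos h3 h3)] at hd
    nlinarith [hd]
  rw [ge_iff_le]
  have hpow : (3/2:ℝ)^d = 3^d / 2^d := by rw [div_pow]
  rw [hpow, mul_div_assoc', div_le_iff₀ h2]
  nlinarith [h5', h2, h3]
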